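/- Let U' and U'' be unitary operators on complex Hilbert spaces K' and K'' respectively, and let Y : K' → K'' be a bounded operator with ‖Y‖ ≤ 1 and Y∘U' = U''∘Y. Then there exists a minimal AA-unitary coupling of (U',K') and (U'',K'') realizing Y: a complex Hilbert space K, a unitary operator U on K, and linear isometries i' : K' → K, i'' : K'' → K with i'∘U' = U∘i', i''∘U'' = U∘i'', range i' + range i'' dense in K, and ⟨i''(k''), i'(k')⟩_K = ⟨k'', Y k'⟩_{K''} for all k' ∈ K', k'' ∈ K'' (equivalently (i'')* ∘ i' = Y). -/

import Mathlib

open ContinuousLinearMap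
set_option maxHeartbeats 1000000 in
open ContinuousLinearMap in
lemma aux_defect {K' K'' : Type}
    [NormedAddCommGroup K'] [InnerProductSpace ℂ K'] [CompleteSpace K']
    [NormedAddCommGroup K''] [InnerProductSpace ℂ K''] [CompleteSpace K'']
    (U' : K' →L[ℂ] K') (hU' : U' ∈ unitary (K' →L[ℂ] K'))
    (U'' : K'' →L[ℂ] K'') (hU'' : U'' ∈ unitary (K'' →L[ℂ] K''))
    (Y : K' →L[ℂ] K'') (hY : ‖Y‖ ≤ 1) (hYint : Y.comp U' = U''.comp Y) :
    ∃ D : K' →L[ℂ] K', IsSelfAdjoint D ∧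
      (∀ a : K', ‖D a‖ ^ 2 + ‖Y a‖ ^ 2 = ‖a‖ ^ 2) ∧ U' * D = D * U' := by
  obtain ⟨hu1, hu2⟩ := Unitary.mem_iff.mp hU'
  obtain ⟨hv1, hv2⟩ := Unitary.mem_iff.mp hU''
  have hu1' : ∀ x, adjoint U' (U' x) = x := fun x => by
    simpa [mul_apply, star_eq_adjoint] using ContinuousLinearMap.ext_iff.mp hu1 x
  have hv1' : ∀ x, adjoint U'' (U'' x) = x := fun x => by
    simpa [mul_apply, star_eq_adjoint] using ContinuousLinearMap.ext_iff.mp hv1 x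
  set T : K' →L[ℂ] K' := (adjoint Y).comp Y with hT
  have hTapp : ∀ x, T x = adjoint Y (Y x) := fun _ => rfl
  have hpos : 0 ≤ (1 : K' →L[ℂ] K') - T := by
    rw [ContinuousLinearMap.nonneg_iff_isPositive]
    constructor
    · exact (show IsSelfAdjoint ((1 : K' →L[ℂ] K') - T) by
        simp [IsSelfAdjoint, star_sub, star_eq_adjoint, hT, adjoint_comp, adjoint_adjoint]).isSymmetric
    · intro x
      have h2 : (inner ℂ (((1 : K' →L[ℂ] K') - T) x) x : ℂ)
          = inner ℂ x x - inner ℂ (Y x) (Y x) := by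
        rw [sub_apply, ContinuousLinearMap.one_apply, inner_sub_left, hTapp, adjoint_inner_left]
      have hYx : ‖Y x‖ ≤ ‖x‖ := by
        calc ‖Y x‖ ≤ ‖Y‖ * ‖x‖ := Y.le_opNorm x
        _ ≤ 1 * ‖x‖ := by gcongr
        _ = ‖x‖ := one_mul _
      have : ContinuousLinearMap.reApplyInnerSelf ((1 : K' →L[ℂ] K') - T) x
          = ‖x‖ ^ 2 - ‖Y x‖ ^ 2 := by
        simp only [ContinuousLinearMap.reApplyInnerSelf, h2, map_sub,
          inner_self_eq_norm_sq]
      rw [this]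
      nlinarith [norm_nonneg (Y x), norm_nonneg x]
  set D : K' →L[ℂ] K' := CFC.sqrt ((1 : K' →L[ℂ] K') - T) with hD
  have hDnn : 0 ≤ D := CFC.sqrt_nonneg _
  have hDsa : IsSelfAdjoint D := IsSelfAdjoint.of_nonneg hDnn
  have hDsq : D * D = (1 : K' →L[ℂ] K') - T := by
    have := CFC.sq_sqrt ((1 : K' →L[ℂ] K') - T) hpos
    rwa [sq] at this
  clear_value D
  refine ⟨D, hDsa, ?_, ?_⟩
  · intro a
    have h1 : (inner ℂ (D a) (D a) : ℂ) = inner ℂ ((D * D) a) a := by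
      rw [ContinuousLinearMap.mul_apply, ← adjoint_inner_left]
      congr 1
      exact congrFun (congrArg _ hDsa.adjoint_eq) _
    have h2 : (inner ℂ ((D * D) a) a : ℂ) = inner ℂ a a - inner ℂ (Y a) (Y a) := by
      rw [hDsq, sub_apply, ContinuousLinearMap.one_apply, inner_sub_left, hTapp, adjoint_inner_left]
    have key := congrArg RCLike.re (h1.trans h2)
    simp only [map_sub, inner_self_eq_norm_sq] at key
    linarith
  · have hY2 : (adjoint U').comp (adjoint Y) = (adjoint Y).comp (adjoint U'') := by
      have := congrArg adjoint hYint
      rwa [adjoint_comp, adjoint_comp] at this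
    have hconj : star U' * ((1 : K' →L[ℂ] K') - T) * U' = (1 : K' →L[ℂ] K') - T := by
      ext x
      have hY1 : Y (U' x) = U'' (Y x) := ContinuousLinearMap.ext_iff.mp hYint x
      have hY2' : ∀ z, adjoint U' (adjoint Y z) = adjoint Y (adjoint U'' z) :=
        fun z => ContinuousLinearMap.ext_iff.mp hY2 z
      simp only [ContinuousLinearMap.mul_apply, sub_apply, ContinuousLinearMap.one_apply, star_eq_adjoint, hTapp, map_sub,
        hY1, hY2', hu1', hv1']
    have hx : (star U' * D * U') * (star U' * D * U')
        = (1 : K' →L[ℂ] K') - T := by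
      calc (star U' * D * U') * (star U' * D * U')
          = star U' * D * (U' * star U') * D * U' := by simp only [mul_assoc]
        _ = star U' * (D * D) * U' := by rw [hu2, mul_one]; simp only [mul_assoc]
        _ = _ := by rw [hDsq, hconj]
    have hxnn : 0 ≤ star U' * D * U' := star_left_conjugate_nonneg hDnn U'
    have hDx : D = star U' * D * U' := hD.trans (CFC.sqrt_unique hx hxnn)
    calc U' * D = U' * (star U' * D * U') := by rw [← hDx]
      _ = (U' * star U') * D * U' := by simp only [mul_assoc]
      _ = D * U' := by rw [hu2, one_mul]


/-- An Adamjan–Arov unitary coupling of two unitary operators `(U', K')` and `(U'', K'')`: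
a Hilbert space `K`, a unitary operator `U` on `K`, and isometric embeddings
`i' : K' → K`, `i'' : K'' → K` with `i'∘U' = U∘i'` and `i''∘U'' = U∘i''`. -/
structure AACoupling (K' K'' : Type)
    [NormedAddCommGroup K'] [InnerProductSpace ℂ K'] [CompleteSpace K']
    [NormedAddCommGroup K''] [InnerProductSpace ℂ K''] [CompleteSpace K'']
    (U' : K' →L[ℂ] K') (U'' : K'' →L[ℂ] K'') where
  K : Type
  [instN : NormedAddCommGroup K]
  [instI : InnerProductSpace ℂ K]
  [instC : CompleteSpace K]
  U : K →L[ℂ] K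
  hU : U ∈ unitary (K →L[ℂ] K)
  i' : K' →L[ℂ] K
  i'' : K'' →L[ℂ] K
  hi' : Isometry i'
  hi'' : Isometry i''
  hint' : ∀ x : K', i' (U' x) = U (i' x)
  hint'' : ∀ x : K'', i'' (U'' x) = U (i'' x)

attribute [instance] AACoupling.instN AACoupling.instI AACoupling.instC

/-- **Existence of a minimal AA-unitary coupling realizing a given contractive
intertwiner** `Y : K' → K''` of `(U', K')` and `(U'', K'')`. -/
theorem stmt_7 {K' K'' : Type}
    [NormedAddCommGroup K'] [InnerProductSpace ℂ K'] [CompleteSpace K']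
    [NormedAddCommGroup K''] [InnerProductSpace ℂ K''] [CompleteSpace K'']
    (U' : K' →L[ℂ] K') (hU' : U' ∈ unitary (K' →L[ℂ] K'))
    (U'' : K'' →L[ℂ] K'') (hU'' : U'' ∈ unitary (K'' →L[ℂ] K''))
    (Y : K' →L[ℂ] K'') (hY : ‖Y‖ ≤ 1) (hYint : Y.comp U' = U''.comp Y) :
    ∃ C : AACoupling K' K'' U' U'',
      Dense {x : C.K | ∃ (a : K') (b : K''), x = C.i' a + C.i'' b} ∧
      (∀ (k' : K') (k'' : K''),
        (inner ℂ (C.i'' k'') (C.i' k') : ℂ) = inner ℂ k'' (Y k')) ∧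
      (adjoint C.i'').comp C.i' = Y := by
  obtain ⟨D, hDsa, hDnorm, hDcomm⟩ := aux_defect U' hU' U'' hU'' Y hY hYint
  obtain ⟨hu1, hu2⟩ := Unitary.mem_iff.mp hU'
  have hu1' : ∀ x, adjoint U' (U' x) = x := fun x => by
    simpa [mul_apply, star_eq_adjoint] using ContinuousLinearMap.ext_iff.mp hu1 x
  have hu2' : ∀ x, U' (adjoint U' x) = x := fun x => by
    simpa [mul_apply, star_eq_adjoint] using ContinuousLinearMap.ext_iff.mp hu2 x
  have hDU : ∀ a, D (U' a) = U' (D a) := fun a =>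
    (ContinuousLinearMap.ext_iff.mp hDcomm a).symm
  have hDadj : ∀ a, D (adjoint U' a) = adjoint U' (D a) := by
    have h := congrArg star hDcomm
    rw [star_mul, star_mul, hDsa.star_eq] at h
    intro a
    simpa [star_eq_adjoint, mul_apply] using ContinuousLinearMap.ext_iff.mp h a
  set L : Submodule ℂ K' := (LinearMap.range D.toLinearMap).topologicalClosure with hLdef
  haveI : CompleteSpace ↥L := (LinearMap.range D.toLinearMap).isClosed_topologicalClosure.completeSpace_coe
  have hmem : ∀ a : K', D a ∈ L :=
    fun a => Submodule.le_topologicalClosure _ (LinearMap.mem_range_self D.toLinearMap a)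
  have hmaps : ∀ (f : K' →L[ℂ] K'), (∀ a, f (D a) = D (f a)) →
      ∀ x : K', x ∈ L → f x ∈ L := by
    intro f hf x hx
    have hx' : x ∈ closure (LinearMap.range D.toLinearMap : Set K') := by
      rw [← Submodule.topologicalClosure_coe]; exact hx
    have h2 : f x ∈ closure (LinearMap.range D.toLinearMap : Set K') :=
      map_mem_closure f.continuous hx' (fun y hy => by
        obtain ⟨a, rfl⟩ := hy
        exact ⟨f a, (hf a).symm⟩)
    rw [← SetLike.mem_coe, Submodule.topologicalClosure_coe]
    exact h2
  have hU'L : ∀ x : K', x ∈ L → U' x ∈ L := hmaps U' (fun a => (hDU a).symm)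
  have hU'adjL : ∀ x : K', x ∈ L → adjoint U' x ∈ L :=
    hmaps (adjoint U') (fun a => (hDadj a).symm)
  -- the unitary on L
  let eL : ↥L ≃ₗᵢ[ℂ] ↥L :=
  { toFun := fun x => ⟨U' x.1, hU'L x.1 x.2⟩
    map_add' := fun x y => Subtype.ext (by simp)
    map_smul' := fun c x => Subtype.ext (by simp)
    invFun := fun x => ⟨adjoint U' x.1, hU'adjL x.1 x.2⟩
    left_inv := fun x => Subtype.ext (hu1' x.1)
    right_inv := fun x => Subtype.ext (hu2' x.1)
    norm_map' := fun x => U'.norm_map_of_mem_unitary hU' x.1 }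
  let e'' : K'' ≃ₗᵢ[ℂ] K'' := Unitary.linearIsometryEquiv ⟨U'', hU''⟩
  -- the big space
  let eK : WithLp 2 (K'' × ↥L) ≃ₗᵢ[ℂ] WithLp 2 (K'' × ↥L) :=
  { toLinearEquiv := (WithLp.linearEquiv 2 ℂ (K'' × ↥L)).trans
      ((e''.toLinearEquiv.prodCongr eL.toLinearEquiv).trans
        (WithLp.linearEquiv 2 ℂ (K'' × ↥L)).symm)
    norm_map' := fun x => by
      have h1 := WithLp.prod_norm_sq_eq_of_L2
        ((WithLp.equiv 2 (K'' × ↥L)).symm (e'' x.fst, eL x.snd))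
      rw [show ((WithLp.equiv 2 (K'' × ↥L)).symm (e'' x.fst, eL x.snd)).fst = e'' x.fst from rfl,
        show ((WithLp.equiv 2 (K'' × ↥L)).symm (e'' x.fst, eL x.snd)).snd = eL x.snd from rfl, e''.norm_map, eL.norm_map,
        ← WithLp.prod_norm_sq_eq_of_L2 x] at h1
      have h2 := congrArg Real.sqrt h1
      rwa [Real.sqrt_sq (norm_nonneg _), Real.sqrt_sq (norm_nonneg _)] at h2 }
  let i'li : K' →ₗᵢ[ℂ] WithLp 2 (K'' × ↥L) :=
  { toLinearMap := ((WithLp.linearEquiv 2 ℂ (K'' × ↥L)).symm.toLinearMap).comp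
      ((Y.toLinearMap).prod ((D.codRestrict L hmem).toLinearMap))
    norm_map' := fun a => by
      have h1 := WithLp.prod_norm_sq_eq_of_L2
        ((WithLp.equiv 2 (K'' × ↥L)).symm (Y a, D.codRestrict L hmem a))
      rw [show ((WithLp.equiv 2 (K'' × ↥L)).symm (Y a, D.codRestrict L hmem a)).fst = Y a from rfl,
        show ((WithLp.equiv 2 (K'' × ↥L)).symm (Y a, D.codRestrict L hmem a)).snd = D.codRestrict L hmem a from rfl] at h1
      have hc : ‖D.codRestrict L hmem a‖ = ‖D a‖ := rfl
      rw [hc] at h1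
      have h1' : ‖(WithLp.equiv 2 (K'' × ↥L)).symm (Y a, D.codRestrict L hmem a)‖ ^ 2
          = ‖a‖ ^ 2 := by rw [h1, add_comm]; exact hDnorm a
      have h2 := congrArg Real.sqrt h1'
      rwa [Real.sqrt_sq (norm_nonneg _), Real.sqrt_sq (norm_nonneg _)] at h2 }
  let i''li : K'' →ₗᵢ[ℂ] WithLp 2 (K'' × ↥L) :=
  { toLinearMap := ((WithLp.linearEquiv 2 ℂ (K'' × ↥L)).symm.toLinearMap).comp
      (LinearMap.inl ℂ K'' ↥L)
    norm_map' := fun b => WithLp.norm_toLp_fst 2 K'' ↥L b }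
  let Usub := Unitary.linearIsometryEquiv.symm eK
  have hUapp : ∀ x, (Usub : WithLp 2 (K'' × ↥L) →L[ℂ] WithLp 2 (K'' × ↥L)) x = eK x :=
    fun x => rfl
  -- intertwining for i'
  have hint1 : ∀ a : K', i'li (U' a)
      = (Usub : WithLp 2 (K'' × ↥L) →L[ℂ] WithLp 2 (K'' × ↥L)) (i'li a) := by
    intro a
    rw [hUapp]
    show (WithLp.equiv 2 (K'' × ↥L)).symm (Y (U' a), D.codRestrict L hmem (U' a))
      = eK ((WithLp.equiv 2 (K'' × ↥L)).symm (Y a, D.codRestrict L hmem a))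
    have heq : eK ((WithLp.equiv 2 (K'' × ↥L)).symm (Y a, D.codRestrict L hmem a))
        = (WithLp.equiv 2 (K'' × ↥L)).symm (e'' (Y a), eL (D.codRestrict L hmem a)) := rfl
    rw [heq]
    congr 1
    refine Prod.ext ?_ ?_
    · exact ContinuousLinearMap.ext_iff.mp hYint a
    · exact Subtype.ext (hDU a)
  have hint2 : ∀ b : K'', i''li (U'' b)
      = (Usub : WithLp 2 (K'' × ↥L) →L[ℂ] WithLp 2 (K'' × ↥L)) (i''li b) := by
    intro b
    rw [hUapp]
    show (WithLp.equiv 2 (K'' × ↥L)).symm (U'' b, 0)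
      = eK ((WithLp.equiv 2 (K'' × ↥L)).symm (b, 0))
    have heq : eK ((WithLp.equiv 2 (K'' × ↥L)).symm (b, 0))
        = (WithLp.equiv 2 (K'' × ↥L)).symm (e'' b, eL 0) := rfl
    rw [heq]
    congr 1
    refine Prod.ext rfl ?_
    · exact (map_zero eL).symm
  -- inner ℂ product identity
  have hinner : ∀ (a : K') (b : K''),
      (inner ℂ (i''li b) (i'li a) : ℂ) = inner ℂ b (Y a) := by
    intro a b
    rw [show (i''li b : WithLp 2 (K'' × ↥L))
        = (WithLp.equiv 2 (K'' × ↥L)).symm (b, 0) from rfl,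
       show (i'li a : WithLp 2 (K'' × ↥L))
        = (WithLp.equiv 2 (K'' × ↥L)).symm (Y a, D.codRestrict L hmem a) from rfl,
       WithLp.prod_inner_apply]
    simp [WithLp.equiv_symm_apply, WithLp.toLp_fst, WithLp.toLp_snd]
  -- density
  have hdense : Dense {x : WithLp 2 (K'' × ↥L) |
      ∃ (a : K') (b : K''), x = i'li.toContinuousLinearMap a + i''li.toContinuousLinearMap b} := by
    intro x
    rw [Metric.mem_closure_iff]
    intro ε hε
    have hl : ((x.snd : ↥L) : K') ∈ closure (LinearMap.range D.toLinearMap : Set K') := by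
      rw [← Submodule.topologicalClosure_coe]
      exact x.snd.2
    rw [Metric.mem_closure_iff] at hl
    obtain ⟨y, hy, hdy⟩ := hl ε hε
    obtain ⟨a, rfl⟩ := hy
    refine ⟨i'li.toContinuousLinearMap a + i''li.toContinuousLinearMap (x.fst - Y a),
      ⟨a, x.fst - Y a, rfl⟩, ?_⟩
    have hsum : i'li.toContinuousLinearMap a + i''li.toContinuousLinearMap (x.fst - Y a)
        = (WithLp.equiv 2 (K'' × ↥L)).symm (x.fst, ⟨D a, hmem a⟩) := by
      show (WithLp.linearEquiv 2 ℂ (K'' × ↥L)).symm (Y a, D.codRestrict L hmem a)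
          + (WithLp.linearEquiv 2 ℂ (K'' × ↥L)).symm (x.fst - Y a, 0)
        = (WithLp.linearEquiv 2 ℂ (K'' × ↥L)).symm (x.fst, ⟨D a, hmem a⟩)
      rw [← map_add]
      congr 1
      refine Prod.ext ?_ ?_
      · show Y a + (x.fst - Y a) = x.fst; abel
      · show D.codRestrict L hmem a + 0 = ⟨D a, hmem a⟩; simp; rfl
    rw [hsum]
    have hd := WithLp.prod_dist_eq_of_L2 x ((WithLp.equiv 2 (K'' × ↥L)).symm (x.fst, ⟨D a, hmem a⟩))
    rw [show ((WithLp.equiv 2 (K'' × ↥L)).symm (x.fst, ⟨D a, hmem a⟩)).fst = x.fst from rfl,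
        show ((WithLp.equiv 2 (K'' × ↥L)).symm (x.fst, ⟨D a, hmem a⟩)).snd = (⟨D a, hmem a⟩ : ↥L) from rfl] at hd
    have hfst : dist x.fst x.fst = 0 := dist_self _
    rw [hfst] at hd
    have hsnd : dist x.snd (⟨D a, hmem a⟩ : ↥L) = dist ((x.snd : ↥L) : K') (D a) := rfl
    rw [hsnd] at hd
    have : dist x ((WithLp.equiv 2 (K'' × ↥L)).symm (x.fst, ⟨D a, hmem a⟩))
        = dist ((x.snd : ↥L) : K') (D a) := by
      rw [hd]
      rw [show (0:ℝ) ^ 2 + dist ((x.snd : ↥L) : K') (D a) ^ 2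
          = dist ((x.snd : ↥L) : K') (D a) ^ 2 by ring]
      exact Real.sqrt_sq dist_nonneg
    rw [this]
    exact hdy
  refine ⟨{ K := WithLp 2 (K'' × ↥L)
            U := (Usub : WithLp 2 (K'' × ↥L) →L[ℂ] WithLp 2 (K'' × ↥L))
            hU := Usub.2
            i' := i'li.toContinuousLinearMap
            i'' := i''li.toContinuousLinearMap
            hi' := i'li.isometry
            hi'' := i''li.isometry
            hint' := hint1
            hint'' := hint2 }, hdense, fun k' k'' => hinner k' k'', ?_⟩
  ext a
  refine ext_inner_left ℂ fun b => ?_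
  rw [ContinuousLinearMap.comp_apply, adjoint_inner_right]
  exact hinner a b
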